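/- arXiv:2111.13523 — 3 statements merged into one kernel-verified Lean document; each statement's English description precedes it below -/
import Mathlib

section
/- Let U ⊆ Σ* be a commutative regular language with a product-form minimal automaton and sc(U) = n. Then each of the four languages ↑U (upward closure), ↓U (downward closure), the upward interior Σ* ∖ ↓(Σ* ∖ U), and the downward interior Σ* ∖ ↑(Σ* ∖ U) is regular with state complexity at most n. -/
set_option linter.unusedSectionVars false
set_option maxHeartbeats 1000000


/-- The Nerode right-congruence of a language `L`: `u ≡_L v` iff
for all words `x`, `u ++ x ∈ L ↔ v ++ x ∈ L`. -/
def NerodeEq {α : Type*} (L : Set (List α)) (u v : List α) : Prop :=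
  ∀ x : List α, u ++ x ∈ L ↔ v ++ x ∈ L

/-- The Nerode right-congruence as a setoid on words. -/
def nerodeSetoid {α : Type*} (L : Set (List α)) : Setoid (List α) where
  r := NerodeEq L
  iseqv := ⟨fun _ _ => Iff.rfl, fun h x => (h x).symm, fun h1 h2 x => (h1 x).trans (h2 x)⟩

/-- A language is regular iff its Nerode right-congruence has finitely many classes. -/
def RegularLang {α : Type*} (L : Set (List α)) : Prop :=
  Finite (Quotient (nerodeSetoid L))

/-- The state complexity of `L`: the number of Nerode right-congruence classes. -/
noncomputable def sc {α : Type*} (L : Set (List α)) : ℕ :=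
  Nat.card (Quotient (nerodeSetoid L))

/-- A language is commutative if membership only depends on the number of
occurrences of each letter. -/
def CommutativeLang {α : Type*} [DecidableEq α] (L : Set (List α)) : Prop :=
  ∀ u v : List α, (∀ x : α, u.count x = v.count x) → (u ∈ L ↔ v ∈ L)

/-- A (commutative) language has a product-form minimal automaton iff for all words
`u, v`: `u ≡_L v` holds if and only if `x^{|u|_x} ≡_L x^{|v|_x}` for every letter `x`. -/
def HasProductForm {α : Type*} [DecidableEq α] (L : Set (List α)) : Prop :=
  ∀ u v : List α,
    NerodeEq L u v ↔
      ∀ x : α, NerodeEq L (List.replicate (u.count x) x) (List.replicate (v.count x) x)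

section Aux

variable {α : Type*} [Fintype α] [DecidableEq α]

lemma nerode_refl (L : Set (List α)) (u : List α) : NerodeEq L u u := fun _ => Iff.rfl

lemma nerode_symm {L : Set (List α)} {u v : List α} (h : NerodeEq L u v) : NerodeEq L v u :=
  fun x => (h x).symm

lemma nerode_trans {L : Set (List α)} {u v w : List α} (h1 : NerodeEq L u v)
    (h2 : NerodeEq L v w) : NerodeEq L u w := fun x => (h1 x).trans (h2 x)

lemma nerode_append_right {L : Set (List α)} {u v : List α} (h : NerodeEq L u v)
    (w : List α) : NerodeEq L (u ++ w) (v ++ w) := by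
  intro x
  simpa [List.append_assoc] using h (w ++ x)

lemma nerode_replicate_add {L : Set (List α)} {a : α} {i j : ℕ}
    (h : NerodeEq L (List.replicate i a) (List.replicate j a)) (t : ℕ) :
    NerodeEq L (List.replicate (i + t) a) (List.replicate (j + t) a) := by
  rw [List.replicate_add, List.replicate_add]
  exact nerode_append_right h _

lemma exists_lasso (L : Set (List α)) (hr : Finite (Quotient (nerodeSetoid L))) (a : α) :
    ∃ m q : ℕ, 0 < q ∧
      NerodeEq L (List.replicate m a) (List.replicate (m + q) a) ∧
      ∀ i j : ℕ, i < m + q → j < m + q →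
        NerodeEq L (List.replicate i a) (List.replicate j a) → i = j := by
  classical
  set f : ℕ → Quotient (nerodeSetoid L) :=
    fun i => Quotient.mk (nerodeSetoid L) (List.replicate i a) with hf
  obtain ⟨x, y, hxy, hfeq⟩ := Finite.exists_ne_map_eq_of_infinite f
  have hex : ∃ j : ℕ, ∃ i, i < j ∧ f i = f j := by
    rcases Nat.lt_or_ge x y with h | h
    · exact ⟨y, x, h, hfeq⟩
    · exact ⟨x, y, Nat.lt_of_le_of_ne h (Ne.symm hxy), hfeq.symm⟩
  set j0 := Nat.find hex with hj0
  obtain ⟨m, hm, hfm⟩ := Nat.find_spec hex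
  refine ⟨m, j0 - m, by omega, ?_, ?_⟩
  · have : m + (j0 - m) = j0 := by omega
    rw [this]
    exact Quotient.exact hfm
  · intro i j hi hj hij
    have hmq : m + (j0 - m) = j0 := by omega
    rw [hmq] at hi hj
    by_contra hne
    have : ∃ i' j', i' < j' ∧ j' < j0 ∧ f i' = f j' := by
      rcases Nat.lt_or_ge i j with h | h
      · exact ⟨i, j, h, hj, Quotient.sound hij⟩
      · exact ⟨j, i, by omega, hi, Quotient.sound (nerode_symm hij)⟩
    obtain ⟨i', j', hij', hjlt, hfeq'⟩ := this
    exact Nat.find_min hex hjlt ⟨i', hij', hfeq'⟩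

lemma lasso_pump {L : Set (List α)} {a : α} {m q : ℕ}
    (hmq : NerodeEq L (List.replicate m a) (List.replicate (m + q) a))
    {i : ℕ} (hi : m ≤ i) (k : ℕ) :
    NerodeEq L (List.replicate i a) (List.replicate (i + k * q) a) := by
  induction k with
  | zero => simpa using nerode_refl L _
  | succ k ih =>
    refine nerode_trans ih ?_
    have h1 : NerodeEq L (List.replicate (m + (i + k * q - m)) a)
        (List.replicate (m + q + (i + k * q - m)) a) := nerode_replicate_add hmq _
    have e1 : m + (i + k * q - m) = i + k * q := by omega
    have e2 : m + q + (i + k * q - m) = i + (k + 1) * q := by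
      have : (k + 1) * q = k * q + q := by ring
      omega
    rw [e1, e2] at h1
    exact h1

lemma lasso_cf {L : Set (List α)} {a : α} {m q : ℕ} (hq : 0 < q)
    (hmq : NerodeEq L (List.replicate m a) (List.replicate (m + q) a)) (k : ℕ) :
    ∃ k' : ℕ, k' ≤ k ∧ k' < m + q ∧
      NerodeEq L (List.replicate k' a) (List.replicate k a) := by
  by_cases hk : k < m + q
  · exact ⟨k, le_refl _, hk, nerode_refl L _⟩
  · push_neg at hk
    refine ⟨m + (k - m) % q, ?_, by have := Nat.mod_lt (k - m) hq; omega, ?_⟩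
    · have := Nat.mod_le (k - m) q; omega
    · have h := lasso_pump hmq (i := m + (k - m) % q) (by omega) ((k - m) / q)
      have e : m + (k - m) % q + (k - m) / q * q = k := by
        have h1 : q * ((k - m) / q) + (k - m) % q = k - m := Nat.div_add_mod _ _
        have h2 : (k - m) / q * q = q * ((k - m) / q) := by ring
        omega
      rwa [e] at h

noncomputable def ofVec (n : α → ℕ) : List α :=
  (Finset.univ.toList).flatMap fun a => List.replicate (n a) a

lemma count_flatMap_eq_zero (n : α → ℕ) (a : α) :
    ∀ l : List α, a ∉ l → (l.flatMap fun b => List.replicate (n b) b).count a = 0 := by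
  intro l
  induction l with
  | nil => simp
  | cons b t ih =>
    intro hmem
    simp only [List.flatMap_cons, List.count_append]
    rw [ih (fun h => hmem (List.mem_cons_of_mem _ h))]
    simp [List.count_replicate]
    intro h; exact absurd (h ▸ (List.mem_cons_self : b ∈ b :: t)) hmem

lemma count_ofVec (n : α → ℕ) (a : α) : (ofVec n).count a = n a := by
  unfold ofVec
  have hnd : (Finset.univ.toList (α := α)).Nodup := Finset.nodup_toList _
  have hmem : a ∈ Finset.univ.toList (α := α) := by simp [Finset.mem_toList]
  revert hnd hmem
  generalize Finset.univ.toList (α := α) = l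
  induction l with
  | nil => simp
  | cons b t ih =>
    intro hnd hmem
    simp only [List.flatMap_cons, List.count_append]
    rcases List.mem_cons.1 hmem with rfl | hat
    · rw [count_flatMap_eq_zero n a t (by simpa using (List.nodup_cons.1 hnd).1)]
      simp [List.count_replicate]
    · have hne : b ≠ a := by
        rintro rfl; exact absurd hat (List.nodup_cons.1 hnd).1
      rw [ih (List.nodup_cons.1 hnd).2 hat]
      simp [List.count_replicate, hne]

lemma exists_sublist_counts :
    ∀ (w : List α) (n : α → ℕ), (∀ a, n a ≤ w.count a) →
      ∃ v : List α, v.Sublist w ∧ ∀ a, v.count a = n a := by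
  intro w
  induction w with
  | nil =>
    intro n hn
    refine ⟨[], List.Sublist.refl _, fun a => ?_⟩
    have := hn a; simp at this ⊢; omega
  | cons x w' ih =>
    intro n hn
    by_cases hx : n x = 0
    · obtain ⟨v, hv, hcount⟩ := ih n (fun a => by
        by_cases hax : a = x
        · subst hax; omega
        · have := hn a; rwa [List.count_cons_of_ne (Ne.symm hax)] at this)
      exact ⟨v, List.Sublist.cons x hv, hcount⟩
    · obtain ⟨v', hv', hcount'⟩ := ih (Function.update n x (n x - 1)) (fun a => by
        by_cases hax : a = x
        · subst hax
          have := hn a; rw [List.count_cons_self] at this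
          rw [Function.update_self]; omega
        · have := hn a; rw [List.count_cons_of_ne (Ne.symm hax)] at this
          rwa [Function.update_of_ne hax])
      refine ⟨x :: v', List.Sublist.cons₂ x hv', fun a => ?_⟩
      by_cases hax : a = x
      · subst hax
        rw [List.count_cons_self]
        have := hcount' a
        rw [Function.update_self] at this
        omega
      · rw [List.count_cons_of_ne (Ne.symm hax)]
        have := hcount' a
        rwa [Function.update_of_ne hax] at this

end Aux

section Main

variable {α : Type*} [Fintype α] [DecidableEq α]
variable {U : Set (List α)}

lemma ofVec_nerode (hp : HasProductForm U) {n n' : α → ℕ}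
    (h : ∀ a, NerodeEq U (List.replicate (n a) a) (List.replicate (n' a) a)) :
    NerodeEq U (ofVec n) (ofVec n') :=
  (hp _ _).mpr (by intro x; rw [count_ofVec, count_ofVec]; exact h x)

lemma ofVec_mem_iff (hp : HasProductForm U) {n n' : α → ℕ}
    (h : ∀ a, NerodeEq U (List.replicate (n a) a) (List.replicate (n' a) a)) :
    ofVec n ∈ U ↔ ofVec n' ∈ U := by
  have := ofVec_nerode hp h []
  simpa using this

lemma mem_up_iff (hc : CommutativeLang U) (w : List α) :
    (w ∈ {u : List α | ∃ v ∈ U, v.Sublist u}) ↔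
      ∃ s : α → ℕ, ofVec s ∈ U ∧ ∀ a, s a ≤ w.count a := by
  constructor
  · rintro ⟨v, hv, hsub⟩
    refine ⟨fun a => v.count a, ?_, fun a => hsub.count_le a⟩
    exact (hc (ofVec _) v (fun a => count_ofVec _ a)).mpr hv
  · rintro ⟨s, hS, hle⟩
    obtain ⟨v, hsub, hcount⟩ := exists_sublist_counts w s hle
    refine ⟨v, ?_, hsub⟩
    exact (hc v (ofVec s) (fun a => by rw [count_ofVec, hcount])).mpr hS

lemma mem_down_iff (hc : CommutativeLang U) (w : List α) :
    (w ∈ {u : List α | ∃ v ∈ U, u.Sublist v}) ↔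
      ∃ s : α → ℕ, ofVec s ∈ U ∧ ∀ a, w.count a ≤ s a := by
  constructor
  · rintro ⟨v, hv, hsub⟩
    refine ⟨fun a => v.count a, ?_, fun a => hsub.count_le a⟩
    exact (hc (ofVec _) v (fun a => count_ofVec _ a)).mpr hv
  · rintro ⟨s, hS, hle⟩
    refine ⟨w ++ ofVec (fun a => s a - w.count a), ?_, List.sublist_append_left _ _⟩
    refine (hc _ (ofVec s) (fun a => ?_)).mpr hS
    rw [List.count_append, count_ofVec, count_ofVec]
    have := hle a
    omega

variable {m p : α → ℕ}

lemma up_key (hp : HasProductForm U) (hp0 : ∀ a, 0 < p a)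
    (hmq : ∀ a, NerodeEq U (List.replicate (m a) a) (List.replicate (m a + p a) a))
    (n n' y : α → ℕ)
    (hmin : ∀ a, min (n a) (m a + p a - 1) = min (n' a) (m a + p a - 1))
    (h : ∃ s : α → ℕ, ofVec s ∈ U ∧ ∀ a, s a ≤ n a + y a) :
    ∃ s : α → ℕ, ofVec s ∈ U ∧ ∀ a, s a ≤ n' a + y a := by
  obtain ⟨s, hS, hle⟩ := h
  have hcf : ∀ a, ∃ k' : ℕ, k' ≤ s a ∧ k' < m a + p a ∧
      NerodeEq U (List.replicate k' a) (List.replicate (s a) a) :=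
    fun a => lasso_cf (hp0 a) (hmq a) (s a)
  choose s' hle' hlt' hner' using hcf
  refine ⟨s', (ofVec_mem_iff hp hner').mpr hS, fun a => ?_⟩
  by_cases hsame : n a = n' a
  · have := hle a; have := hle' a; omega
  · have h1 := hmin a
    have h2 := hp0 a
    have h3 := hlt' a
    omega

lemma down_key (hp : HasProductForm U) (hp0 : ∀ a, 0 < p a)
    (hmq : ∀ a, NerodeEq U (List.replicate (m a) a) (List.replicate (m a + p a) a))
    (n n' y : α → ℕ)
    (hmin : ∀ a, min (n a) (m a) = min (n' a) (m a))
    (h : ∃ s : α → ℕ, ofVec s ∈ U ∧ ∀ a, n a + y a ≤ s a) :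
    ∃ s : α → ℕ, ofVec s ∈ U ∧ ∀ a, n' a + y a ≤ s a := by
  obtain ⟨s, hS, hle⟩ := h
  refine ⟨fun a => if n a = n' a then s a else s a + (n' a + y a) * p a, ?_, fun a => ?_⟩
  · refine (ofVec_mem_iff hp (fun a => ?_)).mpr hS
    by_cases hsame : n a = n' a
    · rw [if_pos hsame]; exact nerode_refl U _
    · rw [if_neg hsame]
      have hma : m a ≤ n a := by have := hmin a; omega
      have : m a ≤ s a := le_trans hma (le_trans (Nat.le_add_right _ _) (hle a))
      exact nerode_symm (lasso_pump (hmq a) this (n' a + y a))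
  · dsimp only
    by_cases hsame : n a = n' a
    · rw [if_pos hsame]
      have := hle a; omega
    · rw [if_neg hsame]
      have h1 : (n' a + y a) ≤ (n' a + y a) * p a :=
        Nat.le_mul_of_pos_right _ (hp0 a)
      omega

lemma conclude (hr : Finite (Quotient (nerodeSetoid U))) (hp : HasProductForm U)
    (hinj : ∀ a, ∀ i j : ℕ, i < m a + p a → j < m a + p a →
        NerodeEq U (List.replicate i a) (List.replicate j a) → i = j)
    (L : Set (List α)) (K : α → ℕ) (hK : ∀ a, K a < m a + p a)
    (hkey : ∀ u v : List α,
      (∀ a, min (u.count a) (K a) = min (v.count a) (K a)) → NerodeEq L u v) :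
    Finite (Quotient (nerodeSetoid L)) ∧
      Nat.card (Quotient (nerodeSetoid L)) ≤ Nat.card (Quotient (nerodeSetoid U)) := by
  haveI := hr
  set g : (∀ a : α, Fin (m a + p a)) → Quotient (nerodeSetoid L) :=
    fun k => Quotient.mk (nerodeSetoid L) (ofVec fun a => min (k a : ℕ) (K a)) with hg
  have hsurj : Function.Surjective g := by
    intro q
    obtain ⟨u, rfl⟩ := Quotient.exists_rep q
    refine ⟨fun a => ⟨min (u.count a) (K a), lt_of_le_of_lt (min_le_right _ _) (hK a)⟩, ?_⟩
    refine Quotient.sound (hkey _ _ (fun a => ?_))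
    rw [count_ofVec]
    dsimp only
    omega
  set Ψ : (∀ a : α, Fin (m a + p a)) → Quotient (nerodeSetoid U) :=
    fun k => Quotient.mk (nerodeSetoid U) (ofVec fun a => (k a : ℕ)) with hΨ
  have hΨinj : Function.Injective Ψ := by
    intro k k' h
    have hn : NerodeEq U (ofVec fun a => (k a : ℕ)) (ofVec fun a => (k' a : ℕ)) :=
      Quotient.exact h
    have h2 := (hp _ _).mp hn
    funext a
    have h3 := h2 a
    rw [count_ofVec, count_ofVec] at h3
    exact Fin.ext (hinj a _ _ (k a).2 (k' a).2 h3)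
  exact ⟨Finite.of_surjective g hsurj,
    le_trans (Nat.card_le_card_of_surjective g hsurj)
      (Nat.card_le_card_of_injective Ψ hΨinj)⟩

lemma closure_bound (hc : CommutativeLang U) (hr : Finite (Quotient (nerodeSetoid U)))
    (hp : HasProductForm U) :
    (Finite (Quotient (nerodeSetoid {u : List α | ∃ v ∈ U, v.Sublist u})) ∧
      Nat.card (Quotient (nerodeSetoid {u : List α | ∃ v ∈ U, v.Sublist u}))
        ≤ Nat.card (Quotient (nerodeSetoid U))) ∧
    (Finite (Quotient (nerodeSetoid {u : List α | ∃ v ∈ U, u.Sublist v})) ∧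
      Nat.card (Quotient (nerodeSetoid {u : List α | ∃ v ∈ U, u.Sublist v}))
        ≤ Nat.card (Quotient (nerodeSetoid U))) := by
  have hlasso := fun a => exists_lasso U hr a
  choose m p hp0 hmq hinj using hlasso
  constructor
  · refine conclude hr hp hinj _ (fun a => m a + p a - 1) (fun a => by have := hp0 a; omega) ?_
    intro u v huv x
    rw [mem_up_iff hc, mem_up_iff hc]
    simp only [List.count_append]
    constructor
    · exact fun h => up_key hp hp0 hmq _ _ _ (fun a => huv a) h
    · exact fun h => up_key hp hp0 hmq _ _ _ (fun a => (huv a).symm) h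
  · refine conclude hr hp hinj _ (fun a => m a) (fun a => by have := hp0 a; omega) ?_
    intro u v huv x
    rw [mem_down_iff hc, mem_down_iff hc]
    simp only [List.count_append]
    constructor
    · exact fun h => down_key hp hp0 hmq _ _ _ (fun a => huv a) h
    · exact fun h => down_key hp hp0 hmq _ _ _ (fun a => (huv a).symm) h

end Main

section Compl

variable {α : Type*} [Fintype α] [DecidableEq α]

lemma nerode_compl (L : Set (List α)) (u v : List α) :
    NerodeEq Lᶜ u v ↔ NerodeEq L u v := by
  unfold NerodeEq
  simp only [Set.mem_compl_iff, not_iff_not]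

noncomputable def quotComplEquiv (L : Set (List α)) :
    Quotient (nerodeSetoid Lᶜ) ≃ Quotient (nerodeSetoid L) :=
  Quotient.congrRight (nerode_compl L)

lemma compl_comm (hc : CommutativeLang (α := α) U) : CommutativeLang Uᶜ := by
  intro u v h
  simp only [Set.mem_compl_iff]
  exact not_congr (hc u v h)

lemma compl_prod {U : Set (List α)} (hp : HasProductForm U) : HasProductForm Uᶜ := by
  intro u v
  simp only [nerode_compl]
  exact hp u v

end Compl


/-- For a commutative regular language `U` with product-form minimal automaton and
`sc U = n`, the upward closure, downward closure, upward interior and downward interior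
(with respect to the subsequence order) are regular with state complexity at most `n`. -/
theorem stmt3 {α : Type*} [Fintype α] [DecidableEq α] (U : Set (List α))
    (hc : CommutativeLang U) (hr : RegularLang U) (hp : HasProductForm U) :
    let up : Set (List α) → Set (List α) := fun M => {u | ∃ v ∈ M, v.Sublist u}
    let down : Set (List α) → Set (List α) := fun M => {u | ∃ v ∈ M, u.Sublist v}
    (RegularLang (up U) ∧ sc (up U) ≤ sc U) ∧
    (RegularLang (down U) ∧ sc (down U) ≤ sc U) ∧
    (RegularLang ((down Uᶜ)ᶜ) ∧ sc ((down Uᶜ)ᶜ) ≤ sc U) ∧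
    (RegularLang ((up Uᶜ)ᶜ) ∧ sc ((up Uᶜ)ᶜ) ≤ sc U) := by
  intro up down
  have hrU : Finite (Quotient (nerodeSetoid U)) := hr
  obtain ⟨⟨hupf, hupc⟩, ⟨hdownf, hdownc⟩⟩ := closure_bound hc hrU hp
  -- complement language
  have hcC : CommutativeLang Uᶜ := compl_comm hc
  have hrC : Finite (Quotient (nerodeSetoid Uᶜ)) :=
    Finite.of_equiv _ (quotComplEquiv U).symm
  have hpC : HasProductForm Uᶜ := compl_prod hp
  have hcardC : Nat.card (Quotient (nerodeSetoid Uᶜ)) = Nat.card (Quotient (nerodeSetoid U)) :=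
    Nat.card_congr (quotComplEquiv U)
  obtain ⟨⟨hupfC, hupcC⟩, ⟨hdownfC, hdowncC⟩⟩ := closure_bound hcC hrC hpC
  refine ⟨⟨hupf, hupc⟩, ⟨hdownf, hdownc⟩, ⟨?_, ?_⟩, ⟨?_, ?_⟩⟩
  · haveI := hdownfC
    exact Finite.of_equiv _ (quotComplEquiv (down Uᶜ)).symm
  · calc sc ((down Uᶜ)ᶜ) = Nat.card (Quotient (nerodeSetoid (down Uᶜ))) :=
          Nat.card_congr (quotComplEquiv (down Uᶜ))
      _ ≤ Nat.card (Quotient (nerodeSetoid Uᶜ)) := hdowncC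
      _ = sc U := hcardC
  · haveI := hupfC
    exact Finite.of_equiv _ (quotComplEquiv (up Uᶜ)).symm
  · calc sc ((up Uᶜ)ᶜ) = Nat.card (Quotient (nerodeSetoid (up Uᶜ))) :=
          Nat.card_congr (quotComplEquiv (up Uᶜ))
      _ ≤ Nat.card (Quotient (nerodeSetoid Uᶜ)) := hupcC
      _ = sc U := hcardC
end

section
/- Let Σ = {a_1,…,a_k} and let L ⊆ Σ* satisfy L = π_1(L) ⧢ π_2(L) ⧢ ⋯ ⧢ π_k(L). Then for each j ∈ {1,…,k} and all m, n ≥ 0: a_j^m ≡_L a_j^n (Nerode right-congruence of L over Σ) if and only if a_j^m ≡_{π_j(L)} a_j^n, where the latter is the Nerode right-congruence of π_j(L) considered over the unary alphabet {a_j}, i.e., for all x ∈ {a_j}*: a_j^m x ∈ π_j(L) ↔ a_j^n x ∈ π_j(L). -/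
/-- `IsShuffleOf u v w` holds iff `w` is an interleaving `x₁y₁x₂y₂⋯xₙyₙ`
with `u = x₁⋯xₙ` and `v = y₁⋯yₙ`. -/
inductive IsShuffleOf {α : Type*} : List α → List α → List α → Prop
  | nil : IsShuffleOf [] [] []
  | left {u v w : List α} {a : α} : IsShuffleOf u v w → IsShuffleOf (a :: u) v (a :: w)
  | right {u v w : List α} {a : α} : IsShuffleOf u v w → IsShuffleOf u (a :: v) (a :: w)

/-- The shuffle of two languages. -/
def shuffleLang {α : Type*} (U V : Set (List α)) : Set (List α) :=
  {w | ∃ u ∈ U, ∃ v ∈ V, IsShuffleOf u v w}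

/-- The iterated shuffle `L₁ ⧢ L₂ ⧢ ⋯ ⧢ Lₙ` of a list of languages
(`{ε}` is the neutral element of the shuffle). -/
def shuffles {α : Type*} (Ls : List (Set (List α))) : Set (List α) :=
  Ls.foldr shuffleLang {[]}


section Aux

variable {α : Type*}

theorem IsShuffleOf.eq_of_left_nil {u v w : List α} (h : IsShuffleOf u v w) (hu : u = []) :
    w = v := by
  induction h with
  | nil => rfl
  | left _ _ => simp at hu
  | right _ ih => simp_all

theorem IsShuffleOf.eq_of_right_nil {u v w : List α} (h : IsShuffleOf u v w) (hv : v = []) :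
    w = u := by
  induction h with
  | nil => rfl
  | right _ _ => simp at hv
  | left _ ih => simp_all

theorem IsShuffleOf.filter (p : α → Bool) {u v w : List α} (h : IsShuffleOf u v w) :
    IsShuffleOf (u.filter p) (v.filter p) (w.filter p) := by
  induction h with
  | nil => exact .nil
  | @left u v w a _ ih =>
    by_cases hp : p a
    · simp only [List.filter_cons, hp, if_true]; exact .left ih
    · simp only [List.filter_cons, hp, if_false, Bool.false_eq_true]; exact ih
  | @right u v w a _ ih =>
    by_cases hp : p a
    · simp only [List.filter_cons, hp, if_true]; exact .right ih
    · simp only [List.filter_cons, hp, if_false, Bool.false_eq_true]; exact ih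

theorem isShuffleOf_filter_split (p : α → Bool) (w : List α) :
    IsShuffleOf (w.filter p) (w.filter fun c => !p c) w := by
  induction w with
  | nil => exact .nil
  | cons a w ih =>
    by_cases hp : p a <;> simp [List.filter_cons, hp]
    · exact .left ih
    · exact .right ih

theorem IsShuffleOf.mem_or_mem {u v w : List α} (h : IsShuffleOf u v w) {c : α} (hc : c ∈ w) :
    c ∈ u ∨ c ∈ v := by
  induction h with
  | nil => simp at hc
  | @left u v w a _ ih =>
    rcases List.mem_cons.mp hc with rfl | hc
    · exact Or.inl (List.mem_cons_self)
    · rcases ih hc with h | h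
      · exact Or.inl (List.mem_cons_of_mem _ h)
      · exact Or.inr h
  | @right u v w a _ ih =>
    rcases List.mem_cons.mp hc with rfl | hc
    · exact Or.inr (List.mem_cons_self)
    · rcases ih hc with h | h
      · exact Or.inl h
      · exact Or.inr (List.mem_cons_of_mem _ h)

theorem mem_of_mem_shuffles [DecidableEq α] (l : List α) (F : α → Set (List α))
    (hF : ∀ a, ∀ s ∈ F a, ∀ c ∈ s, c = a) :
    ∀ w ∈ shuffles (l.map F), ∀ c ∈ w, c ∈ l := by
  induction l with
  | nil =>
    intro w hw c hc
    simp only [List.map_nil, shuffles, List.foldr_nil, Set.mem_singleton_iff] at hw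
    subst hw; simp at hc
  | cons a l ih =>
    rintro w ⟨u, hu, v, hv, hs⟩ c hc
    rcases hs.mem_or_mem hc with h | h
    · exact List.mem_cons.mpr (Or.inl (hF a u hu c h))
    · exact List.mem_cons.mpr (Or.inr (ih v hv c h))

theorem mem_shuffles_iff [DecidableEq α] (l : List α) (F : α → Set (List α))
    (hF : ∀ a, ∀ s ∈ F a, ∀ c ∈ s, c = a) (hnd : l.Nodup) :
    ∀ w : List α, (∀ c ∈ w, c ∈ l) →
      (w ∈ shuffles (l.map F) ↔ ∀ a ∈ l, w.filter (fun c => c = a) ∈ F a) := by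
  induction l with
  | nil =>
    intro w hw
    have hwnil : w = [] := by
      cases w with
      | nil => rfl
      | cons c w => exact absurd (hw c (List.mem_cons_self)) (by simp)
    subst hwnil
    simp [shuffles]
  | cons a l ih =>
    intro w hw
    obtain ⟨ha, hnd'⟩ := List.nodup_cons.mp hnd
    constructor
    · rintro ⟨u, hu, v, hv, hs⟩
      have hvl : ∀ c ∈ v, c ∈ l := mem_of_mem_shuffles l F hF v hv
      intro b hb
      rcases List.mem_cons.mp hb with rfl | hb
      · have h1 := hs.filter (fun c => decide (c = b))
        have hu' : u.filter (fun c => decide (c = b)) = u :=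
          List.filter_eq_self.mpr fun c hc => by simpa using hF b u hu c hc
        have hv' : v.filter (fun c => decide (c = b)) = [] :=
          List.filter_eq_nil_iff.mpr fun c hc => by
            simp only [decide_eq_true_eq]
            exact fun h => ha (h ▸ hvl c hc)
        rw [hu', hv'] at h1
        rw [h1.eq_of_right_nil rfl]
        exact hu
      · have hba : b ≠ a := fun h => ha (h ▸ hb)
        have h1 := hs.filter (fun c => decide (c = b))
        have hu' : u.filter (fun c => decide (c = b)) = [] :=
          List.filter_eq_nil_iff.mpr fun c hc => by
            simp only [decide_eq_true_eq]
            exact fun h => hba (by rw [← h, hF a u hu c hc])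
        rw [hu'] at h1
        rw [h1.eq_of_left_nil rfl]
        exact ((ih hnd' v hvl).mp hv) b hb
    · intro h
      refine ⟨w.filter (fun c => decide (c = a)), h a (List.mem_cons_self),
        w.filter (fun c => !decide (c = a)), ?_, isShuffleOf_filter_split _ w⟩
      have hvl : ∀ c ∈ w.filter (fun c => !decide (c = a)), c ∈ l := by
        intro c hc
        have := List.mem_filter.mp hc
        rcases List.mem_cons.mp (hw c this.1) with rfl | h'
        · simp at this
        · exact h'
      refine (ih hnd' _ hvl).mpr fun b hb => ?_
      have hba : b ≠ a := fun h => ha (h ▸ hb)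
      have : (w.filter (fun c => !decide (c = a))).filter (fun c => decide (c = b)) =
          w.filter (fun c => decide (c = b)) := by
        rw [List.filter_filter]
        apply List.filter_congr
        intro c _
        by_cases hc : c = b <;> simp [hc, hba]
      rw [this]
      exact h b (List.mem_cons_of_mem _ hb)

end Aux

/-- If `L = π_1(L) ⧢ ⋯ ⧢ π_k(L)` over `Σ = {a_1, …, a_k}`, then for each letter `a_j`
and all `m, n ≥ 0`: `a_j^m ≡_L a_j^n` iff `a_j^m` and `a_j^n` are Nerode-equivalent
for `π_j(L)` over the unary alphabet `{a_j}`. -/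
theorem stmt10 (k : ℕ) (L : Set (List (Fin k)))
    (hL : L = shuffles
      (List.ofFn fun j : Fin k => (fun w : List (Fin k) => w.filter (fun x => x = j)) '' L)) :
    ∀ (j : Fin k) (m n : ℕ),
      NerodeEq L (List.replicate m j) (List.replicate n j) ↔
      (∀ x : List (Fin k), (∀ c ∈ x, c = j) →
        (List.replicate m j ++ x ∈ (fun w : List (Fin k) => w.filter (fun y => y = j)) '' L ↔
         List.replicate n j ++ x ∈ (fun w : List (Fin k) => w.filter (fun y => y = j)) '' L)) := by
  intro j m n
  have hF : ∀ a : Fin k, ∀ s ∈ (fun w : List (Fin k) => w.filter (fun x => decide (x = a))) '' L,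
      ∀ c ∈ s, c = a := by
    rintro a s ⟨w, _, rfl⟩ c hc
    simpa using (List.mem_filter.mp hc).2
  have memL : ∀ w : List (Fin k),
      w ∈ L ↔ ∀ i : Fin k, w.filter (fun x => decide (x = i)) ∈
        (fun w : List (Fin k) => w.filter (fun x => decide (x = i))) '' L := by
    intro w
    conv_lhs => rw [hL]
    rw [List.ofFn_eq_map]
    rw [mem_shuffles_iff (List.finRange k) _ hF (List.nodup_finRange k) w
      (fun c _ => List.mem_finRange c)]
    constructor
    · intro h i; exact h i (List.mem_finRange i)
    · intro h i _; exact h i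
  have key : ∀ m n : ℕ, NerodeEq L (List.replicate m j) (List.replicate n j) →
      ∀ x : List (Fin k), (∀ c ∈ x, c = j) →
      List.replicate m j ++ x ∈ (fun w : List (Fin k) => w.filter (fun y => decide (y = j))) '' L →
      List.replicate n j ++ x ∈ (fun w : List (Fin k) => w.filter (fun y => decide (y = j))) '' L := by
    rintro m n h x hx ⟨w, hwL, hwf⟩
    have hwmem : List.replicate m j ++ (x ++ w.filter (fun c => !decide (c = j))) ∈ L := by
      rw [memL]
      intro i
      by_cases hij : i = j
      · subst hij
        have : (List.replicate m i ++ (x ++ w.filter (fun c => !decide (c = i)))).filter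
            (fun y => decide (y = i)) = List.replicate m i ++ x := by
          simp only [List.filter_append, List.filter_filter]
          rw [List.filter_eq_self.mpr (by intro c hc; simp [List.eq_of_mem_replicate hc]),
            List.filter_eq_self.mpr (by intro c hc; simp [hx c hc]),
            List.filter_eq_nil_iff.mpr (by intro c _; simp)]
          simp
        rw [this]
        exact ⟨w, hwL, hwf⟩
      · have : (List.replicate m j ++ (x ++ w.filter (fun c => !decide (c = j)))).filter
            (fun y => decide (y = i)) = w.filter (fun y => decide (y = i)) := by
          simp only [List.filter_append, List.filter_filter]
          rw [List.filter_eq_nil_iff.mpr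
              (by intro c hc; simp [List.eq_of_mem_replicate hc, Ne.symm hij]),
            List.filter_eq_nil_iff.mpr (by intro c hc; simp [hx c hc, Ne.symm hij])]
          simp only [List.nil_append]
          apply List.filter_congr
          intro c _
          by_cases hc : c = i <;> simp [hc, hij]
        rw [this]
        exact ⟨w, hwL, rfl⟩
    have hn := (h (x ++ w.filter (fun c => !decide (c = j)))).mp hwmem
    refine ⟨List.replicate n j ++ (x ++ w.filter (fun c => !decide (c = j))), hn, ?_⟩
    simp only [List.filter_append, List.filter_filter]
    rw [List.filter_eq_self.mpr (by intro c hc; simp [List.eq_of_mem_replicate hc]),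
      List.filter_eq_self.mpr (by intro c hc; simp [hx c hc]),
      List.filter_eq_nil_iff.mpr (by intro c _; simp)]
    simp
  constructor
  · intro h x hx
    have hsymm : NerodeEq L (List.replicate n j) (List.replicate m j) := fun y => (h y).symm
    exact ⟨key m n h x hx, key n m hsymm x hx⟩
  · intro h x
    rw [memL, memL]
    constructor <;> intro h' i <;> [have := h' i; have := h' i]
    all_goals {
      by_cases hij : i = j
      · subst hij
        have heq : ∀ p : ℕ, (List.replicate p i ++ x).filter (fun y => decide (y = i)) =
            List.replicate p i ++ x.filter (fun y => decide (y = i)) := by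
          intro p
          rw [List.filter_append,
            List.filter_eq_self.mpr (by intro c hc; simp [List.eq_of_mem_replicate hc])]
        rw [heq] at this ⊢
        have hall : ∀ c ∈ x.filter (fun y => decide (y = i)), c = i := by
          intro c hc; simpa using (List.mem_filter.mp hc).2
        first
        | exact (h (x.filter (fun y => decide (y = i))) hall).mpr this
        | exact (h (x.filter (fun y => decide (y = i))) hall).mp this
      · have heq : ∀ p : ℕ, (List.replicate p j ++ x).filter (fun y => decide (y = i)) =
            x.filter (fun y => decide (y = i)) := by
          intro p
          rw [List.filter_append, List.filter_eq_nil_iff.mpr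
            (by intro c hc; simp [List.eq_of_mem_replicate hc, Ne.symm hij])]
          simp
        rw [heq] at this ⊢
        exact this
    }
end

section
/- Let Σ = {a_1,…,a_k} and, for each j ∈ {1,…,k}, let L_j ⊆ {a_j}* be a regular and infinite unary language. Then the shuffle L = L_1 ⧢ L_2 ⧢ ⋯ ⧢ L_k satisfies sc(L) = sc(L_1)·sc(L_2)·⋯·sc(L_k), where sc(L_j) is the state complexity of L_j over the alphabet {a_j}; moreover, L is a commutative regular language with a product-form minimal automaton. -/
/- ===================== auxiliary lemmas ===================== -/


section Aux
variable {α : Type*}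

lemma shuffle_count [DecidableEq α] {u v w : List α} (h : IsShuffleOf u v w) (a : α) :
    w.count a = u.count a + v.count a := by
  induction h with
  | nil => simp
  | left _ ih => simp [List.count_cons, ih]; omega
  | right _ ih => simp [List.count_cons, ih]; omega

lemma shuffle_mem {u v w : List α} (h : IsShuffleOf u v w) {a : α} (ha : a ∈ w) :
    a ∈ u ∨ a ∈ v := by
  induction h with
  | nil => simp at ha
  | left _ ih =>
    rcases List.mem_cons.1 ha with rfl | h'
    · exact Or.inl (List.mem_cons_self)
    · rcases ih h' with h | h
      · exact Or.inl (List.mem_cons_of_mem _ h)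
      · exact Or.inr h
  | right _ ih =>
    rcases List.mem_cons.1 ha with rfl | h'
    · exact Or.inr (List.mem_cons_self)
    · rcases ih h' with h | h
      · exact Or.inl h
      · exact Or.inr (List.mem_cons_of_mem _ h)

lemma shuffle_filter (p : α → Bool) (w : List α) :
    IsShuffleOf (w.filter p) (w.filter fun a => !p a) w := by
  induction w with
  | nil => simpa using IsShuffleOf.nil
  | cons a t ih =>
    by_cases h : p a
    · simpa [List.filter_cons, h] using IsShuffleOf.left ih
    · simpa [List.filter_cons, h] using IsShuffleOf.right ih

lemma unit_eq_rep (x : List Unit) : x = List.replicate x.length () := by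
  induction x with
  | nil => rfl
  | cons a t ih => simpa [List.replicate_succ] using ih

lemma map_const_eq (a : List Unit) {β : Type*} (j : β) :
    a.map (fun _ => j) = List.replicate a.length j := by
  induction a with
  | nil => rfl
  | cons b t ih => simp [List.replicate_succ, ih]

end Aux

/- ===================== the language ===================== -/

variable {k : ℕ}

def Lset (A : Fin k → Set (List Unit)) : Set (List (Fin k)) :=
  {w | ∀ j, List.replicate (List.count j w) () ∈ A j}

lemma mem_shuffles_aux (A : Fin k → Set (List Unit)) (s : List (Fin k)) (hs : s.Nodup)
    (w : List (Fin k)) :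
    w ∈ shuffles (s.map (fun j => (fun w : List Unit => w.map (fun _ => j)) '' A j)) ↔
      ((∀ j ∈ s, List.replicate (List.count j w) () ∈ A j) ∧ ∀ x ∈ w, x ∈ s) := by
  induction s generalizing w with
  | nil =>
    simp only [List.map_nil, shuffles, List.foldr_nil]
    constructor
    · rintro (rfl : w = [])
      simp
    · rintro ⟨-, h⟩
      have : w = [] := List.eq_nil_iff_forall_not_mem.2 (by simpa using h)
      simp [this]
  | cons j t ih =>
    have hjt : j ∉ t := (List.nodup_cons.1 hs).1
    have ht : t.Nodup := (List.nodup_cons.1 hs).2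
    constructor
    · rintro ⟨u, ⟨a, ha, hua⟩, v, hv, hsh⟩
      obtain ⟨hv1, hv2⟩ := (ih ht v).1 hv
      have hu : u = List.replicate a.length j := by rw [← hua]; exact map_const_eq a j
      rw [hu] at hsh
      have hvj : List.count j v = 0 :=
        List.count_eq_zero_of_not_mem (fun h => hjt (hv2 _ h))
      constructor
      · intro i hi
        rcases List.mem_cons.1 hi with rfl | hi'
        · have : List.count i w = a.length := by
            simp [shuffle_count hsh i, hvj, List.count_replicate_self]
          rw [this, ← unit_eq_rep a]; exact ha
        · have hne : (j == i) = false := by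
            simp only [beq_eq_false_iff_ne, ne_eq]
            rintro rfl; exact hjt hi'
          have : List.count i w = List.count i v := by
            simp [shuffle_count hsh i, List.count_replicate, hne]
          rw [this]; exact hv1 i hi'
      · intro x hx
        rcases shuffle_mem hsh hx with h | h
        · exact (List.eq_of_mem_replicate h) ▸ List.mem_cons_self
        · exact List.mem_cons_of_mem _ (hv2 _ h)
    · rintro ⟨h1, h2⟩
      refine ⟨w.filter (· == j), ?_, w.filter (fun a => !(a == j)), ?_, shuffle_filter _ w⟩
      · refine ⟨List.replicate (List.count j w) (), h1 j (List.mem_cons_self), ?_⟩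
        simp [List.filter_beq]
      · refine (ih ht _).2 ⟨?_, ?_⟩
        · intro i hi
          have hij : (fun a => !(a == j)) i = true := by
            simp only [Bool.not_eq_true', beq_eq_false_iff_ne, ne_eq]
            rintro rfl; exact hjt hi
          rw [show List.count i (List.filter (fun a => !(a == j)) w) = List.count i w from
            List.count_filter hij]
          exact h1 i (List.mem_cons_of_mem _ hi)
        · intro x hx
          have := List.mem_filter.1 hx
          have hxj : x ≠ j := by simpa using this.2
          rcases List.mem_cons.1 (h2 _ this.1) with rfl | h
          · exact absurd rfl hxj
          · exact h

lemma shuffles_eq (A : Fin k → Set (List Unit)) :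
    shuffles (List.ofFn (fun j => (fun w : List Unit => w.map (fun _ => j)) '' A j)) = Lset A := by
  ext w
  rw [List.ofFn_eq_map, mem_shuffles_aux A _ (List.nodup_finRange k)]
  constructor
  · rintro ⟨h1, -⟩ j
    exact h1 j (List.mem_finRange j)
  · intro h
    exact ⟨fun j _ => h j, fun x _ => List.mem_finRange x⟩

/- ===================== unary Nerode ===================== -/

def UE (B : Set (List Unit)) (m m' : ℕ) : Prop :=
  ∀ n, List.replicate (m + n) () ∈ B ↔ List.replicate (m' + n) () ∈ B

lemma nerode_rep_iff (B : Set (List Unit)) (m m' : ℕ) :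
    NerodeEq B (List.replicate m ()) (List.replicate m' ()) ↔ UE B m m' := by
  constructor
  · intro h n
    have := h (List.replicate n ())
    rwa [← List.replicate_add, ← List.replicate_add] at this
  · intro h x
    rw [unit_eq_rep x, ← List.replicate_add, ← List.replicate_add]
    exact h x.length

lemma exists_counts (s : List (Fin k)) (hs : s.Nodup) (d : Fin k → ℕ) :
    ∃ x : List (Fin k), (∀ i ∈ s, List.count i x = d i) ∧ ∀ i ∈ x, i ∈ s := by
  induction s with
  | nil => exact ⟨[], by simp, by simp⟩
  | cons a t ih =>
    have hat : a ∉ t := (List.nodup_cons.1 hs).1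
    obtain ⟨x', h1, h2⟩ := ih (List.nodup_cons.1 hs).2
    refine ⟨List.replicate (d a) a ++ x', ?_, ?_⟩
    · intro i hi
      rcases List.mem_cons.1 hi with rfl | hi'
      · have hz : List.count i x' = 0 :=
          List.count_eq_zero_of_not_mem (fun h => hat (h2 _ h))
        simp [List.count_append, hz]
      · have hne : (a == i) = false := by
          simp only [beq_eq_false_iff_ne, ne_eq]; rintro rfl; exact hat hi'
        simp [List.count_append, List.count_replicate, hne, h1 i hi']
    · intro i hi
      rcases List.mem_append.1 hi with h | h
      · exact (List.eq_of_mem_replicate h) ▸ List.mem_cons_self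
      · exact List.mem_cons_of_mem _ (h2 _ h)

/- ===================== key lemma ===================== -/

lemma key_half {A : Fin k → Set (List Unit)} (hinf : ∀ j, (A j).Infinite)
    {u v : List (Fin k)} (h : NerodeEq (Lset A) u v) (j : Fin k) (n : ℕ)
    (hm : List.replicate (List.count j u + n) () ∈ A j) :
    List.replicate (List.count j v + n) () ∈ A j := by
  have hch : ∀ i : Fin k, ∃ m, List.count i u ≤ m ∧ List.replicate m () ∈ A i := by
    intro i
    have hinj : Set.InjOn List.length (A i) := by
      intro x _ y _ hxy
      rw [unit_eq_rep x, unit_eq_rep y, hxy]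
    obtain ⟨b, hb, hlt⟩ := ((hinf i).image hinj).exists_gt (List.count i u)
    obtain ⟨w0, hw0, rfl⟩ := hb
    exact ⟨w0.length, le_of_lt hlt, (unit_eq_rep w0) ▸ hw0⟩
  choose m hm1 hm2 using hch
  set d : Fin k → ℕ := fun i => if i = j then n else m i - List.count i u with hd
  obtain ⟨x, hx1, _⟩ := exists_counts (List.finRange k) (List.nodup_finRange k) d
  have hcnt : ∀ i, List.count i x = d i := fun i => hx1 i (List.mem_finRange i)
  have hux : u ++ x ∈ Lset A := by
    intro i
    rw [List.count_append, hcnt]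
    by_cases hij : i = j
    · subst hij; simpa [hd] using hm
    · have heq : List.count i u + (m i - List.count i u) = m i := by
        have := hm1 i; omega
      simpa [hd, hij, heq] using hm2 i
  have hvx := (h x).1 hux j
  rw [List.count_append, hcnt] at hvx
  simpa [hd] using hvx

lemma nerodeEq_symm {α : Type*} {L : Set (List α)} {u v : List α}
    (h : NerodeEq L u v) : NerodeEq L v u := fun x => (h x).symm

lemma key {A : Fin k → Set (List Unit)} (hinf : ∀ j, (A j).Infinite) (u v : List (Fin k)) :
    NerodeEq (Lset A) u v ↔ ∀ j, UE (A j) (List.count j u) (List.count j v) := by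
  constructor
  · intro h j n
    exact ⟨key_half hinf h j n, key_half hinf (nerodeEq_symm h) j n⟩
  · intro h x
    have huv : ∀ z : List (Fin k), (z ++ x ∈ Lset A) ↔
        ∀ j, List.replicate (List.count j z + List.count j x) () ∈ A j := by
      intro z
      unfold Lset
      simp [List.count_append]
    rw [huv u, huv v]
    exact forall_congr' fun j => h j (List.count j x)

/- ===================== master ===================== -/

theorem master (k : ℕ) (A : Fin k → Set (List Unit))
    (hreg : ∀ j, RegularLang (A j)) (hinf : ∀ j, (A j).Infinite) :
    sc (Lset A) = ∏ j : Fin k, sc (A j) ∧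
    CommutativeLang (Lset A) ∧ RegularLang (Lset A) ∧ HasProductForm (Lset A) := by
  have key' := key (A := A) hinf
  let F : Quotient (nerodeSetoid (Lset A)) → ∀ j, Quotient (nerodeSetoid (A j)) :=
    Quotient.lift
      (fun w => fun j => (⟦List.replicate (List.count j w) ()⟧ : Quotient (nerodeSetoid (A j))))
      (fun u v h => funext fun j =>
        Quotient.sound ((nerode_rep_iff _ _ _).2 ((key' u v).1 h j)))
  have hFbij : Function.Bijective F := by
    constructor
    · intro a b
      refine Quotient.inductionOn₂ a b fun u v h => ?_
      refine Quotient.sound ((key' u v).2 fun j => ?_)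
      exact (nerode_rep_iff _ _ _).1 (Quotient.exact (congrFun h j))
    · intro g
      obtain ⟨x, hx1, _⟩ := exists_counts (List.finRange k) (List.nodup_finRange k)
        (fun j => (g j).out.length)
      refine ⟨⟦x⟧, funext fun j => ?_⟩
      have hrep : List.replicate (List.count j x) () = (g j).out := by
        rw [hx1 j (List.mem_finRange j)]; exact (unit_eq_rep _).symm
      show (⟦List.replicate (List.count j x) ()⟧ : Quotient (nerodeSetoid (A j))) = g j
      rw [hrep, Quotient.out_eq]
  refine ⟨?_, ?_, ?_, ?_⟩
  · have h1 : Nat.card (Quotient (nerodeSetoid (Lset A)))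
        = Nat.card (∀ j, Quotient (nerodeSetoid (A j))) :=
      Nat.card_congr (Equiv.ofBijective F hFbij)
    rw [sc, h1, Nat.card_pi]
    rfl
  · intro u v h
    constructor
    · intro hu j
      have := hu j
      rwa [h j] at this
    · intro hv j
      have := hv j
      rwa [← h j] at this
  · haveI : ∀ j, Finite (Quotient (nerodeSetoid (A j))) := hreg
    exact Finite.of_equiv _ (Equiv.ofBijective F hFbij).symm
  · intro u v
    rw [key' u v]
    constructor
    · intro h x
      refine (key' _ _).2 fun j => ?_
      by_cases hjx : x = j
      · subst hjx
        simpa [List.count_replicate_self] using h x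
      · have hne : (x == j) = false := by simpa using hjx
        intro n
        simp [List.count_replicate, hne]
    · intro h j
      have := (key' _ _).1 (h j) j
      simpa [List.count_replicate_self] using this

/-- If, for each `j`, `L_j ⊆ {a_j}*` is an infinite regular unary language (encoded by a
language `A j` over the unary alphabet `Unit` embedded into `Σ = {a_1, …, a_k}`), then the
shuffle `L = L_1 ⧢ ⋯ ⧢ L_k` satisfies `sc L = ∏_j sc(L_j)` (where `sc(L_j)` is the state
complexity over the unary alphabet) and `L` is a commutative regular language with
a product-form minimal automaton. -/
theorem stmt11 (k : ℕ) (A : Fin k → Set (List Unit))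
    (hreg : ∀ j, RegularLang (A j)) (hinf : ∀ j, (A j).Infinite) :
    let Lj : Fin k → Set (List (Fin k)) :=
      fun j => (fun w : List Unit => w.map (fun _ => j)) '' A j
    let L : Set (List (Fin k)) := shuffles (List.ofFn Lj)
    sc L = ∏ j : Fin k, sc (A j) ∧
    CommutativeLang L ∧ RegularLang L ∧ HasProductForm L := by
  intro Lj L
  have hL : L = Lset A := shuffles_eq A
  rw [hL]
  exact master k A hreg hinf
end
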